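/- Let k be an algebraically closed field of characteristic 0, g ∈ k(x) with deg g ≥ 2, and α ∈ P^1_k(k) with infinite g-orbit; embed k(x) into Seq_k via h ↦ (h(g^n(α)))_{n≥0}. Then for any A ∈ GL_ℓ(k(x)) there exists a fundamental solution matrix Y ∈ GL_ℓ(Seq_k) with σ(Y) = AY; moreover every entry of Y, every element of k(x)[Y_ij, 1/det(Y)], and more generally every element of a finite-dimensional σ-stable k(x)-subspace of Seq_k, satisfies a linear difference equation over k(x). -/

import Mathlib

/-!
Formalization of a statement from "The Dynamical Mordell-Lang Conjecture for
skew-linear self-maps" by D. Ghioca and J. Xie (with an appendix by M. Wibmer).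
-/

noncomputable section

namespace DML

open scoped Classical

open Polynomial Filter

/-- The degree of (the self-map of `ℙ^1` induced by) a rational function
`g ∈ k(x)`: the maximum of the degrees of its numerator and denominator. -/
def ratDegree {k : Type*} [Field k] (g : RatFunc k) : ℕ :=
  max g.num.natDegree g.denom.natDegree

/-- The self-map of `ℙ^1(k) = k ∪ {∞}` (modelled as `Option k`, with `none` the point
at infinity) induced by a rational function `g ∈ k(x)`. -/
def ratApply {k : Type*} [Field k] (g : RatFunc k) : Option k → Option k
  | Option.some a =>
      if g.denom.eval a = 0 then Option.none
      else Option.some (g.num.eval a / g.denom.eval a)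
  | Option.none =>
      if g.denom.natDegree < g.num.natDegree then Option.none
      else Option.some (g.num.coeff g.denom.natDegree / g.denom.leadingCoeff)

/-- The value (in `k`) of a rational function `h ∈ k(x)` at a point of
`ℙ^1(k) = k ∪ {∞}` (junk value `0` where `h` has a pole). -/
def rEval {k : Type*} [Field k] (h : RatFunc k) : Option k → k
  | Option.some a => h.num.eval a / h.denom.eval a
  | Option.none => h.num.coeff h.denom.natDegree / h.denom.leadingCoeff

/-- The rational function `h ∈ k(x)` is defined (with finite value) at the given point
of `ℙ^1(k) = k ∪ {∞}`. -/
def rDefined {k : Type*} [Field k] (h : RatFunc k) : Option k → Prop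
  | Option.some a => h.denom.eval a ≠ 0
  | Option.none => h.num.natDegree ≤ h.denom.natDegree

/-- The difference ring `Seq_k` of sequences in `k`: sequences `(a_n)_{n ≥ 0}` with two
sequences identified if they agree for all sufficiently large `n` (i.e. germs at
infinity), with componentwise ring operations. -/
abbrev Seq (k : Type*) := Filter.Germ (Filter.atTop : Filter ℕ) k

/-- The shift endomorphism `σ` of `Seq_k`: `σ((a_n)_n) = (a_{n+1})_n`. -/
def seqShift {k : Type*} (a : Seq k) : Seq k :=
  a.compTendsto (fun n => n + 1) (Filter.tendsto_add_atTop_nat 1)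

/-- The image of `c ∈ k` in `Seq_k` as a constant sequence. -/
def seqConst {k : Type*} (c : k) : Seq k := (↑(fun _ : ℕ => c) : Seq k)

/-- The embedding `k(x) → Seq_k`, `h ↦ (h(g^n(α)))_n`, where `g ∈ k(x)` and
`α ∈ ℙ^1(k)` (junk values at the finitely many `n` for which `h` is not defined at
`g^n(α)`; these do not affect the germ when the `g`-orbit of `α` is infinite). -/
def seqOfRat {k : Type*} [Field k] (g : RatFunc k) (α : Option k) (h : RatFunc k) :
    Seq k :=
  (↑(fun n : ℕ => rEval h ((ratApply g)^[n] α)) : Seq k)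

/-- The subring `k(x)[Y_{ij}, 1/det Y]` of `Seq_k` generated by the image of `k(x)`,
the entries of the matrix `Y`, and the inverse of `det Y`. -/
def genRing {k : Type*} [Field k] (g : RatFunc k) (α : Option k) {ℓ : ℕ}
    (Y : Matrix (Fin ℓ) (Fin ℓ) (Seq k)) : Subring (Seq k) :=
  Subring.closure
    (Set.range (seqOfRat g α) ∪ {t | ∃ i j, Y i j = t} ∪ {t | Y.det * t = 1})

/-- `a ∈ Seq_k` satisfies a linear difference equation over (the image of) `k(x)`. -/
def SatisfiesLinDiffEq {k : Type*} [Field k] (g : RatFunc k) (α : Option k)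
    (a : Seq k) : Prop :=
  ∃ m : ℕ, 1 ≤ m ∧ ∃ c : Fin m → RatFunc k,
    seqShift^[m] a = ∑ i : Fin m, seqOfRat g α (c i) * seqShift^[(i : ℕ)] a
section Aux

variable {k : Type*} [Field k]

/-- the orbit sequence -/
def orb (g : RatFunc k) (α : Option k) : ℕ → Option k := fun n => (ratApply g)^[n] α

lemma orb_succ (g : RatFunc k) (α : Option k) (n : ℕ) :
    orb g α (n + 1) = ratApply g (orb g α n) := Function.iterate_succ_apply' _ _ _

lemma orb_add (g : RatFunc k) (α : Option k) (t p : ℕ) :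
    orb g α (t + p) = (ratApply g)^[t] (orb g α p) := Function.iterate_add_apply _ _ _ _

variable {g : RatFunc k} {α : Option k}
variable (horb : (Set.range fun n => (ratApply g)^[n] α).Infinite)

include horb

lemma orb_injective : Function.Injective (orb g α) := by
  intro m m' hmm'
  by_contra hne
  wlog hlt : m < m' generalizing m m'
  · exact this hmm'.symm (Ne.symm hne) (by omega)
  set p := m' - m with hp
  have hp0 : 0 < p := by omega
  have hper : ∀ t, m ≤ t → orb g α (t + p) = orb g α t := by
    intro t ht
    have h1 : t + p = (t - m) + m' := by omega
    have h2 : t = (t - m) + m := by omega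
    rw [h1, orb_add, ← hmm', ← orb_add, ← h2]
  have hclaim : ∀ n, ∃ j < m', orb g α n = orb g α j := by
    intro n
    induction n using Nat.strong_induction_on with
    | _ n ih =>
      by_cases hn : n < m'
      · exact ⟨n, hn, rfl⟩
      · obtain ⟨j, hj, hje⟩ := ih (n - p) (by omega)
        refine ⟨j, hj, ?_⟩
        have : n = (n - p) + p := by omega
        rw [this, hper _ (by omega), hje]
  apply horb
  have : (Set.range fun n => (ratApply g)^[n] α) ⊆ (orb g α) '' (Set.Iio m') := by
    rintro x ⟨n, rfl⟩
    obtain ⟨j, hj, hje⟩ := hclaim n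
    exact ⟨j, hj, hje.symm⟩
  exact Set.Finite.subset ((Set.finite_Iio m').image _) this

lemma eventually_not_mem {S : Set (Option k)} (hS : S.Finite) :
    ∀ᶠ n in atTop, orb g α n ∉ S := by
  have hfin : {n : ℕ | ¬ orb g α n ∉ S}.Finite := by
    simp only [not_not]
    exact hS.preimage ((orb_injective horb).injOn)
  rw [← Nat.cofinite_eq_atTop]
  exact Filter.eventually_cofinite.mpr hfin

/-- Eventually the orbit is at a finite point where a given nonzero polynomial
does not vanish. -/
lemma eventually_good {q : k[X]} (hq : q ≠ 0) :
    ∀ᶠ n in atTop, ∃ a, orb g α n = some a ∧ q.eval a ≠ 0 := by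
  have hS : (insert (Option.none : Option k)
      (Option.some '' {x | q.IsRoot x})).Finite :=
    ((Polynomial.finite_setOf_isRoot hq).image _).insert _
  filter_upwards [eventually_not_mem horb hS] with n hn
  match hx : orb g α n with
  | Option.none => exact absurd (hx ▸ Set.mem_insert _ _) hn
  | Option.some a =>
      refine ⟨a, rfl, fun h => hn ?_⟩
      rw [hx]
      exact Set.mem_insert_of_mem _ ⟨a, h, rfl⟩

end Aux
set_option linter.unusedSectionVars false

section Aux2

variable {k : Type*} [Field k]

lemma rEval_some (h : RatFunc k) (a : k) :
    rEval h (some a) = h.num.eval a / h.denom.eval a := rfl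

lemma rEval_spec {p q : k[X]} {x : RatFunc k}
    (hx : algebraMap k[X] (RatFunc k) p / algebraMap k[X] (RatFunc k) q = x)
    {a : k} (hq : q.eval a ≠ 0) (hd : x.denom.eval a ≠ 0) :
    rEval x (some a) = p.eval a / q.eval a := by
  have hq0 : q ≠ 0 := fun h => hq (by simp [h])
  have h1 : algebraMap k[X] (RatFunc k) p / algebraMap k[X] (RatFunc k) q
      = algebraMap k[X] (RatFunc k) x.num / algebraMap k[X] (RatFunc k) x.denom := by
    rw [hx, RatFunc.num_div_denom]
  rw [div_eq_div_iff (RatFunc.algebraMap_ne_zero hq0)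
    (RatFunc.algebraMap_ne_zero (RatFunc.denom_ne_zero x)), ← map_mul, ← map_mul] at h1
  have h2 : p * x.denom = x.num * q := RatFunc.algebraMap_injective k h1
  have h3 := congrArg (Polynomial.eval a) h2
  simp only [Polynomial.eval_mul] at h3
  rw [rEval_some, div_eq_div_iff hd hq]
  linear_combination -h3

lemma seqOfRat_def (g : RatFunc k) (α : Option k) (h : RatFunc k) :
    seqOfRat g α h = (↑(fun n : ℕ => rEval h (orb g α n)) : Seq k) := rfl

lemma rEval_one (x : Option k) : rEval (1 : RatFunc k) x = 1 := by
  cases x <;> simp [rEval, RatFunc.num_one, RatFunc.denom_one]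

lemma rEval_zero (x : Option k) : rEval (0 : RatFunc k) x = 0 := by
  cases x <;> simp [rEval, RatFunc.num_zero, RatFunc.denom_zero]

lemma seqOfRat_one (g : RatFunc k) (α : Option k) : seqOfRat g α 1 = 1 := by
  rw [seqOfRat_def]
  have : (fun n : ℕ => rEval (1 : RatFunc k) (orb g α n)) = fun _ => (1 : k) := by
    funext n; exact rEval_one _
  rw [this]
  rfl

lemma seqOfRat_zero (g : RatFunc k) (α : Option k) : seqOfRat g α 0 = 0 := by
  rw [seqOfRat_def]
  have : (fun n : ℕ => rEval (0 : RatFunc k) (orb g α n)) = fun _ => (0 : k) := by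
    funext n; exact rEval_zero _
  rw [this]
  rfl

variable {g : RatFunc k} {α : Option k}
variable (horb : (Set.range fun n => (ratApply g)^[n] α).Infinite)

include horb

lemma seqOfRat_mul (h1 h2 : RatFunc k) :
    seqOfRat g α (h1 * h2) = seqOfRat g α h1 * seqOfRat g α h2 := by
  simp only [seqOfRat_def, ← Filter.Germ.coe_mul]
  rw [Filter.Germ.coe_eq]
  have hq : h1.denom * h2.denom * (h1 * h2).denom ≠ 0 :=
    mul_ne_zero (mul_ne_zero (RatFunc.denom_ne_zero _) (RatFunc.denom_ne_zero _))
      (RatFunc.denom_ne_zero _)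
  filter_upwards [eventually_good horb hq] with n ⟨a, ha, hqa⟩
  simp only [Polynomial.eval_mul, mul_ne_zero_iff] at hqa
  obtain ⟨⟨h1d, h2d⟩, hd⟩ := hqa
  simp only [Pi.mul_apply]
  rw [ha]
  have hx : algebraMap k[X] (RatFunc k) (h1.num * h2.num) /
      algebraMap k[X] (RatFunc k) (h1.denom * h2.denom) = h1 * h2 := by
    rw [map_mul, map_mul, ← div_mul_div_comm, RatFunc.num_div_denom, RatFunc.num_div_denom]
  rw [rEval_spec hx (by simp [Polynomial.eval_mul]; exact ⟨h1d, h2d⟩) hd]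
  simp only [Polynomial.eval_mul, rEval_some, Pi.mul_apply]
  rw [div_mul_div_comm]

lemma seqOfRat_add (h1 h2 : RatFunc k) :
    seqOfRat g α (h1 + h2) = seqOfRat g α h1 + seqOfRat g α h2 := by
  simp only [seqOfRat_def, ← Filter.Germ.coe_add]
  rw [Filter.Germ.coe_eq]
  have hq : h1.denom * h2.denom * (h1 + h2).denom ≠ 0 :=
    mul_ne_zero (mul_ne_zero (RatFunc.denom_ne_zero _) (RatFunc.denom_ne_zero _))
      (RatFunc.denom_ne_zero _)
  filter_upwards [eventually_good horb hq] with n ⟨a, ha, hqa⟩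
  simp only [Polynomial.eval_mul, mul_ne_zero_iff] at hqa
  obtain ⟨⟨h1d, h2d⟩, hd⟩ := hqa
  simp only [Pi.add_apply]
  rw [ha]
  have hb1 : algebraMap k[X] (RatFunc k) h1.denom ≠ 0 :=
    RatFunc.algebraMap_ne_zero (RatFunc.denom_ne_zero _)
  have hb2 : algebraMap k[X] (RatFunc k) h2.denom ≠ 0 :=
    RatFunc.algebraMap_ne_zero (RatFunc.denom_ne_zero _)
  have hx : algebraMap k[X] (RatFunc k) (h1.num * h2.denom + h1.denom * h2.num) /
      algebraMap k[X] (RatFunc k) (h1.denom * h2.denom) = h1 + h2 := by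
    rw [map_add, map_mul, map_mul, map_mul, ← div_add_div _ _ hb1 hb2,
      RatFunc.num_div_denom, RatFunc.num_div_denom]
  rw [rEval_spec hx (by simp [Polynomial.eval_mul]; exact ⟨h1d, h2d⟩) hd]
  simp only [Polynomial.eval_add, Polynomial.eval_mul, rEval_some, Pi.add_apply]
  rw [div_add_div _ _ h1d h2d]

/-- The embedding `k(x) → Seq_k` as a ring homomorphism. -/
def seqHom : RatFunc k →+* Seq k where
  toFun := seqOfRat g α
  map_one' := seqOfRat_one g α
  map_mul' := seqOfRat_mul horb
  map_zero' := seqOfRat_zero g α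
  map_add' := seqOfRat_add horb

@[simp] lemma seqHom_apply (h : RatFunc k) : seqHom horb h = seqOfRat g α h := rfl

omit horb in
/-- The shift as a ring homomorphism. -/
lemma seqShift_coe (u : ℕ → k) :
    seqShift (↑u : Seq k) = (↑(fun n => u (n + 1)) : Seq k) :=
  (Filter.Germ.coe_compTendsto (l := (atTop : Filter ℕ)) u
    (Filter.tendsto_add_atTop_nat 1)).symm

end Aux2
section Aux3

variable {k : Type*} [Field k]

lemma seqShift_add' (a b : Seq k) : seqShift (a + b) = seqShift a + seqShift b := by
  induction a using Filter.Germ.inductionOn with | _ u =>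
  induction b using Filter.Germ.inductionOn with | _ v =>
  rw [← Filter.Germ.coe_add, seqShift_coe, seqShift_coe, seqShift_coe, ← Filter.Germ.coe_add]
  rfl

lemma seqShift_mul' (a b : Seq k) : seqShift (a * b) = seqShift a * seqShift b := by
  induction a using Filter.Germ.inductionOn with | _ u =>
  induction b using Filter.Germ.inductionOn with | _ v =>
  rw [← Filter.Germ.coe_mul, seqShift_coe, seqShift_coe, seqShift_coe, ← Filter.Germ.coe_mul]
  rfl

lemma seqShift_one' : seqShift (1 : Seq k) = 1 := by
  show seqShift ((↑(fun _ : ℕ => (1:k))) : Seq k) = _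
  rw [seqShift_coe]; rfl

lemma seqShift_zero' : seqShift (0 : Seq k) = 0 := by
  show seqShift ((↑(fun _ : ℕ => (0:k))) : Seq k) = _
  rw [seqShift_coe]; rfl

/-- The shift as a ring homomorphism. -/
def shiftHom : Seq k →+* Seq k where
  toFun := seqShift
  map_one' := seqShift_one'
  map_mul' := seqShift_mul'
  map_zero' := seqShift_zero'
  map_add' := seqShift_add'

@[simp] lemma shiftHom_apply (a : Seq k) : (shiftHom : Seq k →+* Seq k) a = seqShift a := rfl

lemma div_pow_mul_pow {K : Type*} [Field K] (x y : K) (hy : y ≠ 0) {i N : ℕ}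
    (hi : i ≤ N) : (x / y) ^ i * y ^ N = x ^ i * y ^ (N - i) := by
  have h1 : y ^ N = y ^ i * y ^ (N - i) := by rw [← pow_add, Nat.add_sub_cancel' hi]
  rw [h1, div_pow, ← mul_assoc, div_mul_cancel₀ _ (pow_ne_zero i hy)]

/-- Homogenization of `P`, substituting `R/S`. -/
def homog (P R S : k[X]) (N : ℕ) : k[X] :=
  ∑ i ∈ Finset.range (N + 1), C (P.coeff i) * R ^ i * S ^ (N - i)

lemma homog_algebraMap (g : RatFunc k) (P : k[X]) (N : ℕ) (hP : P.natDegree < N + 1) :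
    algebraMap k[X] (RatFunc k) (homog P g.num g.denom N)
      = Polynomial.aeval g P * (algebraMap k[X] (RatFunc k) g.denom) ^ N := by
  have hgd : algebraMap k[X] (RatFunc k) g.denom ≠ 0 :=
    RatFunc.algebraMap_ne_zero (RatFunc.denom_ne_zero g)
  rw [homog, map_sum, Polynomial.aeval_eq_sum_range' hP, Finset.sum_mul]
  refine Finset.sum_congr rfl fun i hi => ?_
  rw [Finset.mem_range] at hi
  have key : g ^ i * (algebraMap k[X] (RatFunc k) g.denom) ^ N
      = algebraMap k[X] (RatFunc k) g.num ^ i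
        * algebraMap k[X] (RatFunc k) g.denom ^ (N - i) := by
    have hgi : g ^ i = (algebraMap k[X] (RatFunc k) g.num
        / algebraMap k[X] (RatFunc k) g.denom) ^ i := by
      rw [RatFunc.num_div_denom]
    rw [hgi]
    exact div_pow_mul_pow (i := i) (N := N) _ _ hgd (by omega)
  rw [map_mul, map_mul, map_pow, map_pow, smul_mul_assoc, key, Algebra.smul_def]
  rw [mul_assoc]
  rfl

lemma homog_eval (P R S : k[X]) (N : ℕ) (hP : P.natDegree < N + 1) {a b : k}
    (hS : S.eval a ≠ 0) (hb : b = R.eval a / S.eval a) :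
    (homog P R S N).eval a = P.eval b * (S.eval a) ^ N := by
  rw [homog, Polynomial.eval_finset_sum, Polynomial.eval_eq_sum_range' hP, Finset.sum_mul]
  refine Finset.sum_congr rfl fun i hi => ?_
  rw [Finset.mem_range] at hi
  simp only [Polynomial.eval_mul, Polynomial.eval_pow, Polynomial.eval_C, smul_eq_mul]
  rw [hb, mul_assoc, mul_assoc]
  congr 1
  exact (div_pow_mul_pow (i := i) (N := N) _ _ hS (by omega)).symm

/-- Composition `h ∘ g` of rational functions. -/
def rcomp (g h : RatFunc k) : RatFunc k :=
  Polynomial.aeval g h.num / Polynomial.aeval g h.denom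

lemma rcomp_eq_div (g h : RatFunc k) (N : ℕ) (hnum : h.num.natDegree < N + 1)
    (hden : h.denom.natDegree < N + 1) :
    rcomp g h = algebraMap k[X] (RatFunc k) (homog h.num g.num g.denom N) /
      algebraMap k[X] (RatFunc k) (homog h.denom g.num g.denom N) := by
  have hgd : (algebraMap k[X] (RatFunc k) g.denom) ^ N ≠ 0 :=
    pow_ne_zero _ (RatFunc.algebraMap_ne_zero (RatFunc.denom_ne_zero g))
  rw [rcomp, homog_algebraMap g _ N hnum, homog_algebraMap g _ N hden,
    mul_div_mul_right _ _ hgd]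

variable {g : RatFunc k} {α : Option k}
variable (horb : (Set.range fun n => (ratApply g)^[n] α).Infinite)
include horb

lemma seqShift_seqOfRat (h : RatFunc k) :
    seqShift (seqOfRat g α h) = seqOfRat g α (rcomp g h) := by
  set N := max h.num.natDegree h.denom.natDegree with hN
  have hnum : h.num.natDegree < N + 1 := lt_of_le_of_lt (le_max_left _ _) (Nat.lt_succ_self N)
  have hden : h.denom.natDegree < N + 1 := lt_of_le_of_lt (le_max_right _ _) (Nat.lt_succ_self N)
  rw [seqOfRat_def, seqShift_coe, seqOfRat_def, Filter.Germ.coe_eq]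
  have hq1 : g.denom * (rcomp g h).denom ≠ 0 :=
    mul_ne_zero (RatFunc.denom_ne_zero _) (RatFunc.denom_ne_zero _)
  have E2 : ∀ᶠ n in atTop, ∃ b, orb g α (n + 1) = some b ∧ h.denom.eval b ≠ 0 :=
    (Filter.tendsto_add_atTop_nat 1).eventually
      (eventually_good horb (RatFunc.denom_ne_zero h))
  filter_upwards [eventually_good horb hq1, E2] with n hgood h2good
  obtain ⟨a, ha, hqa⟩ := hgood
  obtain ⟨b, hb, hQb⟩ := h2good
  simp only [Polynomial.eval_mul, mul_ne_zero_iff] at hqa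
  obtain ⟨hgd, hrd⟩ := hqa
  have hstep : orb g α (n + 1) = some (g.num.eval a / g.denom.eval a) := by
    rw [orb_succ, ha]
    simp [ratApply, hgd]
  have hbb : b = g.num.eval a / g.denom.eval a := by
    rw [hstep] at hb
    exact (Option.some.inj hb).symm
  have hq'eval : (homog h.denom g.num g.denom N).eval a
      = h.denom.eval b * (g.denom.eval a) ^ N := homog_eval _ _ _ N hden hgd hbb
  have hq'ne : (homog h.denom g.num g.denom N).eval a ≠ 0 := by
    rw [hq'eval]
    exact mul_ne_zero hQb (pow_ne_zero _ hgd)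
  show rEval h (orb g α (n + 1)) = rEval (rcomp g h) (orb g α n)
  rw [hstep, ha, ← hbb]
  rw [rEval_spec (rcomp_eq_div g h N hnum hden).symm hq'ne hrd]
  rw [homog_eval h.num g.num g.denom N hnum hgd hbb, hq'eval,
    mul_div_mul_right _ _ (pow_ne_zero _ hgd), rEval_some]

end Aux3
section Aux4

variable {k : Type*} [Field k]

/-- `x` is a `k(x)`-linear combination of the family `b`. -/
def InSpan (g : RatFunc k) (α : Option k) {ι : Type} [Fintype ι] (b : ι → Seq k)
    (x : Seq k) : Prop :=
  ∃ c : ι → RatFunc k, x = ∑ i, seqOfRat g α (c i) * b i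

variable {g : RatFunc k} {α : Option k}

lemma inSpan_zero {ι : Type} [Fintype ι] (b : ι → Seq k) : InSpan g α b 0 :=
  ⟨0, by simp [seqOfRat_zero]⟩

variable (horb : (Set.range fun n => (ratApply g)^[n] α).Infinite)
include horb

lemma seqOfRat_neg (x : RatFunc k) : seqOfRat g α (-x) = -seqOfRat g α x :=
  map_neg (seqHom horb) x

lemma seqOfRat_inv_mul {x : RatFunc k} (hx : x ≠ 0) :
    seqOfRat g α x⁻¹ * seqOfRat g α x = 1 := by
  rw [← seqOfRat_mul horb, inv_mul_cancel₀ hx, seqOfRat_one]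

lemma inSpan_add {ι : Type} [Fintype ι] {b : ι → Seq k} {x y : Seq k}
    (hx : InSpan g α b x) (hy : InSpan g α b y) : InSpan g α b (x + y) := by
  obtain ⟨c, rfl⟩ := hx
  obtain ⟨c', rfl⟩ := hy
  refine ⟨c + c', ?_⟩
  rw [← Finset.sum_add_distrib]
  refine Finset.sum_congr rfl fun i _ => ?_
  rw [Pi.add_apply, seqOfRat_add horb, add_mul]

lemma inSpan_smul {ι : Type} [Fintype ι] {b : ι → Seq k} {x : Seq k}
    (h : RatFunc k) (hx : InSpan g α b x) : InSpan g α b (seqOfRat g α h * x) := by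
  obtain ⟨c, rfl⟩ := hx
  refine ⟨fun i => h * c i, ?_⟩
  rw [Finset.mul_sum]
  refine Finset.sum_congr rfl fun i _ => ?_
  rw [seqOfRat_mul horb, mul_assoc]

lemma inSpan_sum {ι : Type} [Fintype ι] {b : ι → Seq k} {γ : Type*} (s : Finset γ)
    (F : γ → Seq k) (hF : ∀ j ∈ s, InSpan g α b (F j)) :
    InSpan g α b (∑ j ∈ s, F j) := by
  classical
  induction s using Finset.induction_on with
  | empty => simpa using inSpan_zero b
  | insert _ _ hni ih =>
    rw [Finset.sum_insert hni]
    exact inSpan_add horb (hF _ (Finset.mem_insert_self _ _))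
      (ih fun j hj => hF j (Finset.mem_insert_of_mem hj))

lemma inSpan_shift {ι : Type} [Fintype ι] {b : ι → Seq k} {x : Seq k}
    (hb : ∀ i, InSpan g α b (seqShift (b i))) (hx : InSpan g α b x) :
    InSpan g α b (seqShift x) := by
  obtain ⟨c, rfl⟩ := hx
  have hms : seqShift (∑ i : ι, seqOfRat g α (c i) * b i)
      = ∑ i : ι, seqShift (seqOfRat g α (c i) * b i) :=
    map_sum (shiftHom : Seq k →+* Seq k) _ _
  rw [hms]
  refine inSpan_sum horb _ _ fun j _ => ?_
  show InSpan g α b (seqShift (seqOfRat g α (c j) * b j))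
  rw [seqShift_mul', seqShift_seqOfRat horb]
  exact inSpan_smul horb _ (hb j)

/-- The central linear-algebra fact: if all shifts of `a` lie in the span of a
finite family, then `a` satisfies a linear difference equation. -/
lemma satisfies_of_relation (a : Seq k) {N : ℕ} (cc : Fin (N + 1) → RatFunc k)
    (hrel : ∑ i : Fin (N + 1), seqOfRat g α (cc i) * seqShift^[(i : ℕ)] a = 0)
    (hne : ∃ i, cc i ≠ 0) : SatisfiesLinDiffEq g α a := by
  classical
  obtain ⟨i0, hi0⟩ := hne
  set d : ℕ → RatFunc k := fun i => if h : i < N + 1 then cc ⟨i, h⟩ else 0 with hd_def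
  have hd : ∀ i : Fin (N + 1), d (i : ℕ) = cc i := fun i => by
    simp only [hd_def, i.isLt, dif_pos, Fin.eta]
  set T : Finset (Fin (N + 1)) := Finset.univ.filter (fun i => cc i ≠ 0) with hT_def
  have hT : T.Nonempty := ⟨i0, by simp [hT_def, hi0]⟩
  set m : Fin (N + 1) := T.max' hT with hm_def
  have hm : cc m ≠ 0 := (Finset.mem_filter.mp (T.max'_mem hT)).2
  have hmax : ∀ i : Fin (N + 1), cc i ≠ 0 → i ≤ m :=
    fun i hi => Finset.le_max' T i (by simp [hT_def, hi])
  set M : ℕ := (m : ℕ) with hM_def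
  have hdM : d M = cc m := hd m
  have h1 : ∑ i ∈ Finset.range (N + 1), seqOfRat g α (d i) * seqShift^[i] a = 0 := by
    rw [← Fin.sum_univ_eq_sum_range (fun i => seqOfRat g α (d i) * seqShift^[i] a) (N + 1),
      ← hrel]
    exact Finset.sum_congr rfl fun i _ => by rw [hd]
  have h2 : ∑ i ∈ Finset.range (M + 1), seqOfRat g α (d i) * seqShift^[i] a = 0 := by
    rw [← h1]
    refine Finset.sum_subset (Finset.range_subset_range.mpr (by omega)) fun i hi hni => ?_
    rw [Finset.mem_range] at hi
    rw [Finset.mem_range] at hni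
    have hiM : M < i := by omega
    have hdi : d i = 0 := by
      rw [hd_def]
      simp only [hi, dif_pos]
      by_contra hcc
      have h6 := hmax ⟨i, hi⟩ hcc
      rw [Fin.le_def] at h6
      simp only [hM_def] at h6
      omega
    rw [hdi, seqOfRat_zero, zero_mul]
  rw [Finset.sum_range_succ] at h2
  by_cases hM0 : M = 0
  · have h3 : seqOfRat g α (cc m) * a = 0 := by
      have hdM0 : d 0 = cc m := hM0 ▸ hdM
      rw [hM0, Finset.range_zero, Finset.sum_empty, zero_add,
        Function.iterate_zero_apply] at h2
      rw [← hdM0]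
      exact h2
    have ha : a = 0 := by
      calc a = (seqOfRat g α (cc m)⁻¹ * seqOfRat g α (cc m)) * a := by
              rw [seqOfRat_inv_mul horb hm, one_mul]
        _ = seqOfRat g α (cc m)⁻¹ * (seqOfRat g α (cc m) * a) := by ring
        _ = 0 := by rw [h3, mul_zero]
    refine ⟨1, le_refl 1, fun _ => 0, ?_⟩
    rw [ha]
    simp [seqOfRat_zero, seqShift_zero']
  · refine ⟨M, by omega, fun i => -(d (i : ℕ)) / d M, ?_⟩
    have hdM' : d M ≠ 0 := by rw [hdM]; exact hm
    rw [Fin.sum_univ_eq_sum_range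
      (fun i => seqOfRat g α (-(d i) / d M) * seqShift^[i] a) M]
    calc seqShift^[M] a
        = (seqOfRat g α (d M)⁻¹ * seqOfRat g α (d M)) * seqShift^[M] a := by
          rw [seqOfRat_inv_mul horb hdM', one_mul]
      _ = seqOfRat g α (d M)⁻¹ *
          (-∑ i ∈ Finset.range M, seqOfRat g α (d i) * seqShift^[i] a) := by
          rw [← eq_neg_of_add_eq_zero_right h2]; ring
      _ = ∑ i ∈ Finset.range M, seqOfRat g α (-(d i) / d M) * seqShift^[i] a := by
          rw [← Finset.sum_neg_distrib, Finset.mul_sum]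
          refine Finset.sum_congr rfl fun i _ => ?_
          have : -(d i) / d M = (d M)⁻¹ * -(d i) := by field_simp
          rw [this, seqOfRat_mul horb, seqOfRat_neg horb]
          ring

set_option synthInstance.maxHeartbeats 1000000 in
set_option maxHeartbeats 1000000 in
lemma satisfies_of_inSpan {ι : Type} [Fintype ι] (b : ι → Seq k) (a : Seq k)
    (hs : ∀ i : ℕ, InSpan g α b (seqShift^[i] a)) : SatisfiesLinDiffEq g α a := by
  classical
  letI : Module (RatFunc k) (Seq k) := Module.compHom (Seq k) (seqHom horb)
  have hsmul : ∀ (c : RatFunc k) (x : Seq k), c • x = seqOfRat g α c * x :=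
    fun _ _ => rfl
  set N := Fintype.card ι with hN
  let π : (ι → RatFunc k) →ₗ[RatFunc k] Seq k :=
    { toFun := fun c => ∑ i, seqOfRat g α (c i) * b i
      map_add' := fun c c' => by
        rw [← Finset.sum_add_distrib]
        exact Finset.sum_congr rfl fun i _ => by
          rw [Pi.add_apply, seqOfRat_add horb, add_mul]
      map_smul' := fun r c => by
        simp only [RingHom.id_apply]
        rw [hsmul, Finset.mul_sum]
        exact Finset.sum_congr rfl fun i _ => by
          rw [Pi.smul_apply, smul_eq_mul, seqOfRat_mul horb, mul_assoc] }
  have hmem : ∀ i : ℕ, seqShift^[i] a ∈ LinearMap.range π := by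
    intro i
    obtain ⟨c, hc⟩ := hs i
    exact ⟨c, hc.symm⟩
  have hrank : Module.finrank (RatFunc k) (LinearMap.range π) ≤ N := by
    refine le_trans π.finrank_range_le ?_
    rw [Module.finrank_pi]
  set v : Fin (N + 1) → LinearMap.range π := fun i => ⟨seqShift^[(i : ℕ)] a, hmem i⟩
    with hv_def
  have hnli : ¬ LinearIndependent (RatFunc k) v := by
    intro hli
    have := hli.fintype_card_le_finrank
    rw [Fintype.card_fin] at this
    omega
  obtain ⟨cc, hcc, i0, hi0⟩ := Fintype.not_linearIndependent_iff.mp hnli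
  refine satisfies_of_relation horb a cc ?_ ⟨i0, hi0⟩
  have h0 := congrArg ((LinearMap.range π).subtype) hcc
  rw [map_sum] at h0
  simp only [map_smul, map_zero] at h0
  rw [← h0]
  exact Finset.sum_congr rfl fun i _ => by
    rw [hsmul]
    rfl

end Aux4
section Aux5

variable {k : Type*} [Field k] {g : RatFunc k} {α : Option k}

/-- `a` lies in a finite-dimensional σ-stable `k(x)`-subspace of `Seq k`. -/
def Good (g : RatFunc k) (α : Option k) (a : Seq k) : Prop :=
  ∃ (ι : Type) (inst : Fintype ι) (b : ι → Seq k),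
    (∀ i, @InSpan k _ g α ι inst b (seqShift (b i))) ∧ @InSpan k _ g α ι inst b a

lemma inSpan_single {ι : Type} [Fintype ι] [DecidableEq ι] (b : ι → Seq k) (i0 : ι) :
    InSpan g α b (b i0) := by
  refine ⟨fun i => if i = i0 then 1 else 0, ?_⟩
  have : ∀ i : ι, seqOfRat g α (if i = i0 then 1 else 0) * b i
      = if i = i0 then b i else 0 := by
    intro i
    by_cases h : i = i0 <;> simp [h, seqOfRat_one, seqOfRat_zero]
  rw [Finset.sum_congr rfl fun i _ => this i, Finset.sum_ite_eq' Finset.univ i0 b,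
    if_pos (Finset.mem_univ _)]

variable (horb : (Set.range fun n => (ratApply g)^[n] α).Infinite)
include horb

lemma inSpan_neg {ι : Type} [Fintype ι] {b : ι → Seq k} {x : Seq k}
    (hx : InSpan g α b x) : InSpan g α b (-x) := by
  obtain ⟨c, rfl⟩ := hx
  refine ⟨-c, ?_⟩
  rw [← Finset.sum_neg_distrib]
  refine Finset.sum_congr rfl fun i _ => ?_
  rw [Pi.neg_apply, seqOfRat_neg horb, neg_mul]

lemma inSpan_inl {ι₁ ι₂ : Type} [Fintype ι₁] [Fintype ι₂] {b1 : ι₁ → Seq k}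
    (b2 : ι₂ → Seq k) {x : Seq k} (hx : InSpan g α b1 x) :
    InSpan g α (Sum.elim b1 b2) x := by
  obtain ⟨c, rfl⟩ := hx
  refine ⟨Sum.elim c 0, ?_⟩
  rw [Fintype.sum_sum_type]
  simp [seqOfRat_zero]

lemma inSpan_inr {ι₁ ι₂ : Type} [Fintype ι₁] [Fintype ι₂] (b1 : ι₁ → Seq k)
    {b2 : ι₂ → Seq k} {x : Seq k} (hx : InSpan g α b2 x) :
    InSpan g α (Sum.elim b1 b2) x := by
  obtain ⟨c, rfl⟩ := hx
  refine ⟨Sum.elim 0 c, ?_⟩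
  rw [Fintype.sum_sum_type]
  simp [seqOfRat_zero]

lemma inSpan_mul {ι₁ ι₂ : Type} [Fintype ι₁] [Fintype ι₂] {b1 : ι₁ → Seq k}
    {b2 : ι₂ → Seq k} {x y : Seq k} (hx : InSpan g α b1 x) (hy : InSpan g α b2 y) :
    InSpan g α (fun p : ι₁ × ι₂ => b1 p.1 * b2 p.2) (x * y) := by
  obtain ⟨c, rfl⟩ := hx
  obtain ⟨c', rfl⟩ := hy
  refine ⟨fun p => c p.1 * c' p.2, ?_⟩
  rw [Fintype.sum_mul_sum, Fintype.sum_prod_type]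
  refine Finset.sum_congr rfl fun i _ => ?_
  refine Finset.sum_congr rfl fun j _ => ?_
  rw [seqOfRat_mul horb]
  ring

lemma good_satisfies {a : Seq k} (ha : Good g α a) : SatisfiesLinDiffEq g α a := by
  obtain ⟨ι, inst, b, hb, hab⟩ := ha
  refine satisfies_of_inSpan horb b a fun i => ?_
  induction i with
  | zero => simpa using hab
  | succ i ih =>
      rw [Function.iterate_succ_apply']
      exact inSpan_shift horb hb ih

omit horb in
lemma good_seqOfRat (h : RatFunc k) : Good g α (seqOfRat g α h) := by
  refine ⟨Unit, inferInstance, fun _ => 1, fun _ => ⟨fun _ => 1, ?_⟩, ⟨fun _ => h, ?_⟩⟩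
  · simp [seqShift_one', seqOfRat_one]
  · simp

omit horb in
lemma good_zero : Good g α 0 := by
  have := good_seqOfRat (g := g) (α := α) 0
  rwa [seqOfRat_zero] at this

omit horb in
lemma good_one : Good g α 1 := by
  have := good_seqOfRat (g := g) (α := α) 1
  rwa [seqOfRat_one] at this

lemma good_add {x y : Seq k} (hx : Good g α x) (hy : Good g α y) : Good g α (x + y) := by
  obtain ⟨ι₁, inst1, b1, hb1, hx⟩ := hx
  obtain ⟨ι₂, inst2, b2, hb2, hy⟩ := hy
  refine ⟨ι₁ ⊕ ι₂, inferInstance, Sum.elim b1 b2, ?_, ?_⟩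
  · rintro (i | i)
    · exact inSpan_inl horb b2 (hb1 i)
    · exact inSpan_inr horb b1 (hb2 i)
  · exact inSpan_add horb (inSpan_inl horb b2 hx) (inSpan_inr horb b1 hy)

lemma good_neg {x : Seq k} (hx : Good g α x) : Good g α (-x) := by
  obtain ⟨ι₁, inst1, b1, hb1, hx⟩ := hx
  exact ⟨ι₁, inst1, b1, hb1, inSpan_neg horb hx⟩

lemma good_mul {x y : Seq k} (hx : Good g α x) (hy : Good g α y) : Good g α (x * y) := by
  obtain ⟨ι₁, inst1, b1, hb1, hx⟩ := hx
  obtain ⟨ι₂, inst2, b2, hb2, hy⟩ := hy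
  refine ⟨ι₁ × ι₂, inferInstance, fun p => b1 p.1 * b2 p.2, ?_, inSpan_mul horb hx hy⟩
  rintro ⟨i, j⟩
  show InSpan g α _ (seqShift (b1 i * b2 j))
  rw [seqShift_mul']
  exact inSpan_mul horb (hb1 i) (hb2 j)

lemma eventually_rEval_ne {h : RatFunc k} (hh : h ≠ 0) :
    ∀ᶠ n in atTop, rEval h (orb g α n) ≠ 0 := by
  have hq : h.num * h.denom ≠ 0 :=
    mul_ne_zero (RatFunc.num_ne_zero hh) (RatFunc.denom_ne_zero _)
  filter_upwards [eventually_good horb hq] with n hgood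
  obtain ⟨a, ha, hqa⟩ := hgood
  rw [Polynomial.eval_mul, mul_ne_zero_iff] at hqa
  rw [ha, rEval_some]
  exact div_ne_zero hqa.1 hqa.2

end Aux5
set_option maxHeartbeats 1000000 in
theorem exists_fundamental_matrix_and_lin_diff_eqs
    {k : Type*} [Field k] [IsAlgClosed k] [CharZero k]
    (g : RatFunc k) (hg : 2 ≤ ratDegree g)
    (α : Option k)
    (horb : (Set.range fun n => (ratApply g)^[n] α).Infinite)
    (ℓ : ℕ) (A : Matrix (Fin ℓ) (Fin ℓ) (RatFunc k)) (hA : A.det ≠ 0) :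
    (∃ Y : Matrix (Fin ℓ) (Fin ℓ) (Seq k),
      IsUnit Y.det ∧
      (∀ i j, seqShift (Y i j) = ∑ m, seqOfRat g α (A i m) * Y m j) ∧
      (∀ i j, SatisfiesLinDiffEq g α (Y i j)) ∧
      (∀ a ∈ genRing g α Y, SatisfiesLinDiffEq g α a)) ∧
    (∀ V : Set (Seq k), (0 : Seq k) ∈ V →
      (∀ a ∈ V, ∀ b ∈ V, a + b ∈ V) →
      (∀ h : RatFunc k, ∀ a ∈ V, seqOfRat g α h * a ∈ V) →
      (∀ a ∈ V, seqShift a ∈ V) →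
      (∃ n : ℕ, ∃ bb : Fin n → Seq k, (∀ i, bb i ∈ V) ∧
        ∀ vv ∈ V, ∃ c : Fin n → RatFunc k, vv = ∑ i, seqOfRat g α (c i) * bb i) →
      ∀ a ∈ V, SatisfiesLinDiffEq g α a) := by
  classical
  constructor
  · -- Part 1: fundamental matrix
    set An : ℕ → Matrix (Fin ℓ) (Fin ℓ) k :=
      fun n => A.map (fun h => rEval h (orb g α n)) with hAn
    set crh : (ℕ → k) →+* Seq k := Filter.Germ.coeRingHom atTop with hcrh_def
    have hcrh : ∀ u : ℕ → k, crh u = (↑u : Seq k) := fun _ => rfl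
    set BF : Matrix (Fin ℓ) (Fin ℓ) (ℕ → k) :=
      fun i j => fun n => rEval (A i j) (orb g α n) with hBF
    have hBFdet : ∀ n, BF.det n = (An n).det := by
      intro n
      have h1 := RingHom.map_det (Pi.evalRingHom (fun _ : ℕ => k) n) BF
      have h2 : (Pi.evalRingHom (fun _ : ℕ => k) n).mapMatrix BF = An n := by
        ext i j; rfl
      rw [h2] at h1
      exact h1
    have hcoedet : (↑(fun n => (An n).det) : Seq k) = seqOfRat g α A.det := by
      have h1 := RingHom.map_det crh BF
      have h2 : crh.mapMatrix BF = A.map (seqOfRat g α) := by ext i j; rfl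
      rw [h2] at h1
      have h4 : (fun n => (An n).det) = BF.det := by
        funext n; exact (hBFdet n).symm
      rw [h4, ← hcrh, h1]
      exact (RingHom.map_det (seqHom horb) A).symm
    have hAdet0 : ∀ᶠ n in atTop, (An n).det ≠ 0 := by
      have he : ∀ᶠ n in atTop,
          (An n).det = rEval A.det (orb g α n) :=
        Filter.Germ.coe_eq.mp (hcoedet.trans (seqOfRat_def g α A.det))
      filter_upwards [he, eventually_rEval_ne horb hA] with n h1 h2
      rw [h1]; exact h2
    obtain ⟨N, hN⟩ := Filter.eventually_atTop.mp hAdet0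
    set Zm : ℕ → Matrix (Fin ℓ) (Fin ℓ) k :=
      fun n => Nat.rec 1 (fun n Z => if N ≤ n then An n * Z else 1) n with hZm
    have hZsucc : ∀ n, N ≤ n → Zm (n + 1) = An n * Zm n := by
      intro n hn
      show (if N ≤ n then An n * Zm n else 1) = _
      rw [if_pos hn]
    have hZdet : ∀ n, N ≤ n → (Zm n).det ≠ 0 := by
      intro n hn
      induction n, hn using Nat.le_induction with
      | base =>
          have hZN : Zm N = 1 := by
            cases N with
            | zero => rfl
            | succ N' =>
                show (if N' + 1 ≤ N' then An N' * Zm N' else 1) = 1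
                rw [if_neg (by omega)]
          rw [hZN, Matrix.det_one]
          exact one_ne_zero
      | succ n hn ih =>
          rw [hZsucc n hn, Matrix.det_mul]
          exact mul_ne_zero (hN n hn) ih
    set Y : Matrix (Fin ℓ) (Fin ℓ) (Seq k) :=
      fun i j => (↑(fun n => Zm n i j) : Seq k) with hYdef
    have hYeq : ∀ i j, seqShift (Y i j) = ∑ m, seqOfRat g α (A i m) * Y m j := by
      intro i j
      have hl : seqShift (Y i j) = (↑(fun n => Zm (n + 1) i j) : Seq k) :=
        seqShift_coe _
      have hr : (∑ m, seqOfRat g α (A i m) * Y m j)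
          = (↑(fun n => ∑ m, rEval (A i m) (orb g α n) * Zm n m j) : Seq k) := by
        have h2 : (fun n => ∑ m, rEval (A i m) (orb g α n) * Zm n m j)
            = ∑ m, ((fun n => rEval (A i m) (orb g α n)) * (fun n => Zm n m j)) := by
          funext n
          rw [Finset.sum_apply]
          rfl
        rw [h2, ← hcrh, map_sum crh _ Finset.univ]
        refine Finset.sum_congr rfl fun m _ => ?_
        rw [map_mul]
        rfl
      rw [hl, hr, Filter.Germ.coe_eq]
      filter_upwards [eventually_ge_atTop N] with n hn
      rw [hZsucc n hn]
      show (An n * Zm n) i j = _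
      rw [Matrix.mul_apply]
      rfl
    have hdetY : Y.det = (↑(fun n => (Zm n).det) : Seq k) := by
      have h1 := RingHom.map_det crh (Matrix.of fun i j => (fun n => Zm n i j))
      have h2 : crh.mapMatrix (Matrix.of fun i j => (fun n => Zm n i j)) = Y := by
        ext i j; rfl
      rw [h2] at h1
      rw [← h1, ← hcrh]
      congr 1
      funext n
      have h3 := RingHom.map_det (Pi.evalRingHom (fun _ : ℕ => k) n)
        (Matrix.of fun i j => (fun n => Zm n i j))
      have h4 : (Pi.evalRingHom (fun _ : ℕ => k) n).mapMatrix
          (Matrix.of fun i j => (fun n => Zm n i j)) = Zm n := by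
        ext i j; rfl
      rw [h4] at h3
      exact h3
    have hunit : IsUnit Y.det := by
      refine IsUnit.of_mul_eq_one (↑(fun n => ((Zm n).det)⁻¹) : Seq k) ?_
      rw [hdetY, ← Filter.Germ.coe_mul]
      have hone : (1 : Seq k) = (↑(fun _ : ℕ => (1 : k)) : Seq k) := rfl
      rw [hone, Filter.Germ.coe_eq]
      filter_upwards [eventually_ge_atTop N] with n hn
      show (Zm n).det * ((Zm n).det)⁻¹ = 1
      exact mul_inv_cancel₀ (hZdet n hn)
    have hgoodEntry : ∀ i j, Good g α (Y i j) := by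
      intro i j
      refine ⟨Fin ℓ × Fin ℓ, inferInstance, fun p => Y p.1 p.2, ?_,
        inSpan_single _ (i, j)⟩
      rintro ⟨i', j'⟩
      show InSpan g α _ (seqShift (Y i' j'))
      rw [hYeq i' j']
      refine ⟨fun p => if p.2 = j' then A i' p.1 else 0, ?_⟩
      rw [Fintype.sum_prod_type]
      refine Finset.sum_congr rfl fun m _ => ?_
      have hterm : ∀ j'' : Fin ℓ,
          seqOfRat g α (if j'' = j' then A i' m else 0) * Y m j''
            = if j'' = j' then seqOfRat g α (A i' m) * Y m j'' else 0 := by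
        intro j''
        by_cases h : j'' = j' <;> simp [h, seqOfRat_zero]
      rw [Finset.sum_congr rfl fun j'' _ => hterm j'',
        Finset.sum_ite_eq' Finset.univ j'
          (fun j'' => seqOfRat g α (A i' m) * Y m j''),
        if_pos (Finset.mem_univ _)]
    refine ⟨Y, hunit, hYeq, fun i j => good_satisfies horb (hgoodEntry i j), ?_⟩
    intro a ha
    refine good_satisfies horb ?_
    refine Subring.closure_induction ?_ good_zero good_one
      (fun x y _ _ hx hy => good_add horb hx hy)
      (fun x _ hx => good_neg horb hx)
      (fun x y _ _ hx hy => good_mul horb hx hy) ha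
    rintro x (hx | hx)
    · rcases hx with hx | hx
      · obtain ⟨h, rfl⟩ := hx
        exact good_seqOfRat h
      · obtain ⟨i, j, rfl⟩ := hx
        exact hgoodEntry i j
    · -- x is an inverse of det Y
      have e2 : Y.det * x = 1 := hx
      have e1 : seqOfRat g α A.det * Y.det * seqShift x = 1 := by
        have h5 := congrArg seqShift e2
        rw [seqShift_mul', seqShift_one'] at h5
        have h6 : seqShift Y.det = (Y.map seqShift).det :=
          RingHom.map_det (shiftHom : Seq k →+* Seq k) Y
        have h7 : Y.map seqShift = (A.map (seqOfRat g α)) * Y := by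
          ext i j
          rw [Matrix.map_apply, hYeq i j, Matrix.mul_apply]
          exact Finset.sum_congr rfl fun m _ => by rw [Matrix.map_apply]
        have h8 : (A.map (seqOfRat g α)).det = seqOfRat g α A.det :=
          (RingHom.map_det (seqHom horb) A).symm
        rw [h6, h7, Matrix.det_mul, h8] at h5
        linear_combination h5
      have e3 : seqOfRat g α A.det⁻¹ * seqOfRat g α A.det = 1 :=
        seqOfRat_inv_mul horb hA
      have hshift : seqShift x = seqOfRat g α A.det⁻¹ * x := by
        calc seqShift x
            = (seqOfRat g α A.det⁻¹ * seqOfRat g α A.det) * seqShift x := by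
              rw [e3, one_mul]
          _ = (seqOfRat g α A.det⁻¹ * seqOfRat g α A.det) * seqShift x
              * (Y.det * x) := by rw [e2, mul_one]
          _ = seqOfRat g α A.det⁻¹ * (seqOfRat g α A.det * Y.det * seqShift x)
              * x := by ring
          _ = seqOfRat g α A.det⁻¹ * x := by rw [e1, mul_one]
      refine ⟨Unit, inferInstance, fun _ => x, fun _ => ⟨fun _ => A.det⁻¹, ?_⟩,
        ⟨fun _ => 1, ?_⟩⟩
      · simpa using hshift
      · simp [seqOfRat_one]
  · -- Part 2: finite-dimensional σ-stable subspaces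
    intro V _ _ _ hVshift hVspan a haV
    obtain ⟨n, bb, _, hspan⟩ := hVspan
    refine satisfies_of_inSpan horb bb a fun i => ?_
    have hmem : seqShift^[i] a ∈ V := by
      induction i with
      | zero => simpa using haV
      | succ i ih =>
          rw [Function.iterate_succ_apply']
          exact hVshift _ ih
    obtain ⟨c, hc⟩ := hspan _ hmem
    exact ⟨c, hc⟩

end DML
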